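/- Every Boolean function f : (Fin n → Bool) → Bool in the clone generated by {g₀}, where g₀(x,y,z) = x ∨ (y ∧ ¬z), is 0-separating: there exists an index i : Fin n such that for all x, f x = false implies x i = false. -/
import Mathlib


/-- The clone generated by a set `B` of Boolean functions: the smallest family containing all
projections and `B`, and closed under composition. -/
inductive InClone (B : (k : ℕ) → ((Fin k → Bool) → Bool) → Prop) :
    (n : ℕ) → ((Fin n → Bool) → Bool) → Prop
  | proj {n : ℕ} (i : Fin n) : InClone B n (fun x => x i)
  | base {k : ℕ} {g : (Fin k → Bool) → Bool} (hg : B k g) : InClone B k g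
  | comp {k n : ℕ} {g : (Fin k → Bool) → Bool} {h : Fin k → ((Fin n → Bool) → Bool)}
      (hg : InClone B k g) (hh : ∀ i, InClone B n (h i)) :
      InClone B n (fun x => g (fun i => h i x))

/-- g₀(x,y,z) = x ∨ (y ∧ ¬z). -/
def g0 : (Fin 3 → Bool) → Bool := fun x => x 0 || (x 1 && !x 2)

/-- The generating set {g₀}. -/
inductive G0Base : (k : ℕ) → ((Fin k → Bool) → Bool) → Prop
  | g0 : G0Base 3 g0

/-- Every function in the clone generated by {g₀} is 0-separating. -/
theorem clone_g0_zeroSeparating {n : ℕ} {f : (Fin n → Bool) → Bool}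
    (hf : InClone G0Base n f) :
    ∃ i : Fin n, ∀ x : Fin n → Bool, f x = false → x i = false := by
  induction hf with
  | proj i => exact ⟨i, fun x hx => hx⟩
  | base hg =>
      cases hg
      refine ⟨0, fun x hx => ?_⟩
      simp [g0] at hx
      exact hx.1
  | comp hg hh ihg ihh =>
      obtain ⟨i, hi⟩ := ihg
      obtain ⟨j, hj⟩ := ihh i
      exact ⟨j, fun x hx => hj x (hi _ hx)⟩
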